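/- For any N points z_1,…,z_N on the unit sphere S^d ⊂ ℝ^{d+1}, the discrete frame potential satisfies (1/N²)·∑_{i,j=1}^N (z_i·z_j)² ≥ 1/(d+1). -/

import Mathlib

open RealInnerProductSpace

theorem stmt_1 (d N : ℕ) (hN : 0 < N) (z : Fin N → EuclideanSpace ℝ (Fin (d + 1)))
    (hz : ∀ i, ‖z i‖ = 1) :
    (1 / (N : ℝ) ^ 2) * ∑ i, ∑ j, ⟪z i, z j⟫ ^ 2 ≥ 1 / (d + 1) := by
  set M : Fin (d + 1) → Fin (d + 1) → ℝ := fun a b => ∑ i, z i a * z i b with hM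
  have key : (∑ i, ∑ j, ⟪z i, z j⟫ ^ 2) = ∑ a, ∑ b, M a b ^ 2 := by
    have hinner : ∀ i j, ⟪z i, z j⟫ = ∑ a, z i a * z j a := by
      intro i j
      simp [PiLp.inner_apply, RCLike.inner_apply, mul_comm]
    simp only [hinner, hM, sq, Finset.sum_mul_sum]
    calc (∑ i : Fin N, ∑ j : Fin N, ∑ a : Fin (d+1), ∑ b : Fin (d+1),
            z i a * z j a * (z i b * z j b))
        = ∑ p : Fin N × Fin N, ∑ q : Fin (d+1) × Fin (d+1),
            z p.1 q.1 * z p.2 q.1 * (z p.1 q.2 * z p.2 q.2) := by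
          simp only [Fintype.sum_prod_type]
      _ = ∑ q : Fin (d+1) × Fin (d+1), ∑ p : Fin N × Fin N,
            z p.1 q.1 * z p.2 q.1 * (z p.1 q.2 * z p.2 q.2) := Finset.sum_comm
      _ = ∑ a : Fin (d+1), ∑ b : Fin (d+1), ∑ i : Fin N, ∑ j : Fin N,
            z i a * z i b * (z j a * z j b) := by
          simp only [Fintype.sum_prod_type]
          refine Finset.sum_congr rfl fun a _ => Finset.sum_congr rfl fun b _ =>
            Finset.sum_congr rfl fun i _ => Finset.sum_congr rfl fun j _ => by ring
  have trace : (∑ a, M a a) = N := by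
    rw [hM]
    simp only []
    rw [Finset.sum_comm]
    have : ∀ i : Fin N, (∑ a, z i a * z i a) = 1 := by
      intro i
      have := hz i
      have h2 : ⟪z i, z i⟫ = 1 := by
        rw [real_inner_self_eq_norm_sq, this]; norm_num
      rw [← h2, PiLp.inner_apply]
      simp [RCLike.inner_apply, mul_comm, sq]
    simp [this]
  have diag_le : (∑ a, M a a ^ 2) ≤ ∑ a, ∑ b, M a b ^ 2 := by
    apply Finset.sum_le_sum
    intro a _
    exact Finset.single_le_sum (f := fun b => M a b ^ 2) (fun b _ => sq_nonneg _)
      (Finset.mem_univ a)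
  have cs : ((N : ℝ)) ^ 2 ≤ (d + 1) * ∑ a, M a a ^ 2 := by
    have := sq_sum_le_card_mul_sum_sq (s := (Finset.univ : Finset (Fin (d+1))))
      (f := fun a => M a a)
    rw [trace] at this
    simpa using this
  have hd : (0:ℝ) < (d:ℝ) + 1 := by positivity
  have hNpos : (0:ℝ) < (N:ℝ) ^ 2 := by positivity
  have hS : (N:ℝ)^2 ≤ (∑ a, ∑ b, M a b ^ 2) * ((d:ℝ)+1) :=
    calc (N:ℝ)^2 ≤ (d+1) * ∑ a, M a a ^ 2 := cs
      _ ≤ (∑ a, ∑ b, M a b ^ 2) * ((d:ℝ)+1) := by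
          rw [mul_comm]
          exact mul_le_mul_of_nonneg_right diag_le (by positivity)
  rw [ge_iff_le, key, div_le_iff₀ hd, one_div, inv_mul_eq_div, div_mul_eq_mul_div,
    le_div_iff₀ hNpos, one_mul]
  exact hS
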